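/- arXiv:0712.1074 — 2 statements merged into one kernel-verified Lean document; each statement's English description precedes it below -/
import Mathlib

section
/- Let w be a positive integer, p ≥ 2 an integer, and ζ ∈ (0,1] real. Let A_1, …, A_p be finite sets such that any two of them are either disjoint or equal; let A*_1, …, A*_ρ be the distinct sets among them, A*_i occurring exactly l_i times. Let S_1, …, S_q be pairwise distinct sets with |S_i| = p, S_i = {s_i^{(1)}, …, s_i^{(p)}} and s_i^{(j)} ∈ A_j for all i ∈ [q], j ∈ [p]. If q ≥ 2 Σ_{ω=⌈ζp⌉}^{p} ((pw)^ω/ω!) Σ_{n_1+⋯+n_ρ = p−ω, n_i ≤ l_i} (|A*_1|^{n_1} ⋯ |A*_ρ|^{n_ρ})/(n_1! ⋯ n_ρ!), then there exist indices n_1, …, n_w such that the sets S_{n_1}, …, S_{n_w} satisfy |(⋃_{i=1}^{l−1} S_{n_i}) ∩ S_{n_l}| ≤ ζp for every l = 2, …, w. -/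
open Finset

theorem stmt13 {γ : Type*} [DecidableEq γ] (w : ℕ) (hw : 0 < w) (p : ℕ) (hp : 2 ≤ p)
    (ζ : ℝ) (hζ0 : 0 < ζ) (hζ1 : ζ ≤ 1)
    (A : Fin p → Finset γ)
    (hA : ∀ i j, A i = A j ∨ Disjoint (A i) (A j))
    (ρ : ℕ) (Ast : Fin ρ → Finset γ) (hAstInj : Function.Injective Ast)
    (hAstAll : ∀ j, ∃ i, A j = Ast i)
    (l : Fin ρ → ℕ)
    (hl : ∀ i, l i = (Finset.univ.filter fun j => A j = Ast i).card)
    (q : ℕ) (S : Fin q → Finset γ) (hSinj : Function.Injective S)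
    (hScard : ∀ i, (S i).card = p)
    (s : Fin q → Fin p → γ)
    (hs : ∀ i, S i = Finset.image (s i) Finset.univ)
    (hsA : ∀ i j, s i j ∈ A j)
    (hq : 2 * ∑ ω ∈ Finset.Icc ⌈ζ * p⌉₊ p,
          ((p * w : ℝ) ^ ω / ω.factorial) *
            ∑ nn ∈ (Fintype.piFinset fun i => Finset.range (l i + 1)).filter
                (fun nn => ∑ i, nn i = p - ω),
              ∏ i, ((Ast i).card : ℝ) ^ nn i / (nn i).factorial
        ≤ (q : ℝ)) :
    ∃ ν : Fin w → Fin q, ∀ L : Fin w, 1 ≤ (L : ℕ) →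
      ((((Finset.univ.filter fun i => i < L).biUnion fun i => S (ν i)) ∩
          S (ν L)).card : ℝ) ≤ ζ * p := by
  classical
  set m := ⌈ζ * p⌉₊ with hm
  set B := ∑ ω ∈ Finset.Icc m p,
          ((p * w : ℝ) ^ ω / ω.factorial) *
            ∑ nn ∈ (Fintype.piFinset fun i => Finset.range (l i + 1)).filter
                (fun nn => ∑ i, nn i = p - ω),
              ∏ i, ((Ast i).card : ℝ) ^ nn i / (nn i).factorial with hB
  -- injectivity of each s i
  have hsInj : ∀ i, Function.Injective (s i) := by
    intro i
    have h1 : (Finset.univ.image (s i)).card = (Finset.univ : Finset (Fin p)).card := by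
      rw [← hs i, hScard i, card_univ, Fintype.card_fin]
    have h2 := (Finset.card_image_iff).mp h1
    rw [Finset.coe_univ] at h2
    exact Set.injOn_univ.mp h2
  -- choose f
  obtain ⟨f, hf⟩ : ∃ f : Fin p → Fin ρ, ∀ j, A j = Ast (f j) :=
    ⟨fun j => (hAstAll j).choose, fun j => (hAstAll j).choose_spec⟩
  have hfl : ∀ r, (Finset.univ.filter fun j => f j = r).card ≤ l r := by
    intro r
    rw [hl]
    apply card_le_card
    intro j hj
    simp only [mem_filter, mem_univ, true_and] at hj ⊢
    rw [hf j, hj]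
  -- the key counting lemma
  have key : ∀ T : Finset γ, T.card ≤ p * w →
      ((Finset.univ.filter fun i : Fin q => m ≤ (S i ∩ T).card).card : ℝ) ≤ B := by
    intro T hT
    set V : Fin q → Fin ρ → Finset γ :=
      fun i r => (Finset.univ.filter fun j => f j = r ∧ s i j ∉ T).image (s i) with hV
    have hVsub : ∀ i r, V i r ⊆ Ast r := by
      intro i r x hx
      simp only [hV, mem_image, mem_filter, mem_univ, true_and] at hx
      obtain ⟨j, ⟨hjr, _⟩, hjx⟩ := hx
      rw [← hjx, ← hjr, ← hf j]
      exact hsA i j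
    have hVS : ∀ i r, V i r ⊆ S i \ T := by
      intro i r x hx
      simp only [hV, mem_image, mem_filter, mem_univ, true_and] at hx
      obtain ⟨j, ⟨_, hjT⟩, hjx⟩ := hx
      rw [mem_sdiff, ← hjx]
      exact ⟨by rw [hs i]; exact mem_image_of_mem _ (mem_univ j), hjT⟩
    have hVcard : ∀ i r, (V i r).card ≤ l r := by
      intro i r
      refine le_trans card_image_le (le_trans (card_le_card ?_) (hfl r))
      intro j hj
      simp only [mem_filter, mem_univ, true_and] at hj ⊢
      exact hj.1
    have hunion : ∀ i, Finset.univ.biUnion (V i) = S i \ T := by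
      intro i
      apply Finset.Subset.antisymm
      · intro x hx
        rw [mem_biUnion] at hx
        obtain ⟨r, _, hx⟩ := hx
        exact hVS i r hx
      · intro x hx
        rw [mem_sdiff] at hx
        obtain ⟨hx1, hx2⟩ := hx
        rw [hs i, mem_image] at hx1
        obtain ⟨j, _, hjx⟩ := hx1
        rw [mem_biUnion]
        refine ⟨f j, mem_univ _, ?_⟩
        simp only [hV, mem_image, mem_filter, mem_univ, true_and]
        exact ⟨j, ⟨rfl, by rwa [hjx]⟩, hjx⟩
    have hdisjV : ∀ i : Fin q, ∀ r ∈ (Finset.univ : Finset (Fin ρ)),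
        ∀ r' ∈ (Finset.univ : Finset (Fin ρ)), r ≠ r' → Disjoint (V i r) (V i r') := by
      intro i r _ r' _ hrr'
      rw [Finset.disjoint_left]
      intro x hx hx'
      simp only [hV, mem_image, mem_filter, mem_univ, true_and] at hx hx'
      obtain ⟨j, ⟨hjr, _⟩, hjx⟩ := hx
      obtain ⟨j', ⟨hjr', _⟩, hjx'⟩ := hx'
      exact hrr' (by rw [← hjr, ← hjr', hsInj i (hjx.trans hjx'.symm)])
    have hVsum : ∀ i, ∑ r, (V i r).card = p - (S i ∩ T).card := by
      intro i
      have h1 := Finset.card_inter_add_card_sdiff (S i) T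
      rw [hScard i] at h1
      rw [← card_biUnion (hdisjV i), hunion]
      omega
    have hrecover : ∀ i, (S i ∩ T) ∪ Finset.univ.biUnion (V i) = S i := by
      intro i
      rw [hunion]
      ext x
      simp only [mem_union, mem_inter, mem_sdiff]
      tauto
    -- fiberwise over ω
    have h1 : (Finset.univ.filter fun i : Fin q => m ≤ (S i ∩ T).card).card
        = ∑ ω ∈ Finset.Icc m p,
            ((Finset.univ.filter fun i : Fin q => m ≤ (S i ∩ T).card).filter
              fun i => (S i ∩ T).card = ω).card := by
      apply card_eq_sum_card_fiberwise
      intro i hi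
      rw [mem_coe] at hi
      rw [mem_coe, mem_Icc]
      exact ⟨(mem_filter.mp hi).2, (hScard i) ▸ card_le_card inter_subset_left⟩
    have h2 : ∀ ω, ((Finset.univ.filter fun i : Fin q => m ≤ (S i ∩ T).card).filter
              fun i => (S i ∩ T).card = ω).card
        = ∑ nn ∈ (Fintype.piFinset fun r => Finset.range (l r + 1)).filter
                (fun nn => ∑ r, nn r = p - ω),
            (((Finset.univ.filter fun i : Fin q => m ≤ (S i ∩ T).card).filter
              fun i => (S i ∩ T).card = ω).filter
              fun i => (fun r => (V i r).card) = nn).card := by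
      intro ω
      apply card_eq_sum_card_fiberwise
      intro i hi
      rw [mem_coe, mem_filter] at hi ⊢
      refine ⟨Fintype.mem_piFinset.mpr fun r => ?_, ?_⟩
      · rw [mem_range]
        exact Nat.lt_succ_of_le (hVcard i r)
      · rw [hVsum i, hi.2]
    have h3 : ∀ ω, ∀ nn : Fin ρ → ℕ,
        (((Finset.univ.filter fun i : Fin q => m ≤ (S i ∩ T).card).filter
              fun i => (S i ∩ T).card = ω).filter
              fun i => (fun r => (V i r).card) = nn).card
        ≤ T.card.choose ω * ∏ r, ((Ast r).card.choose (nn r)) := by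
      intro ω nn
      have hle := Finset.card_le_card_of_injOn
        (s := ((Finset.univ.filter fun i : Fin q => m ≤ (S i ∩ T).card).filter
              fun i => (S i ∩ T).card = ω).filter
              fun i => (fun r => (V i r).card) = nn)
        (t := (T.powersetCard ω) ×ˢ Fintype.piFinset fun r => (Ast r).powersetCard (nn r))
        (fun i => ((S i ∩ T, fun r => V i r) : Finset γ × (Fin ρ → Finset γ)))
        (fun i hi => by
          rw [mem_coe, mem_filter] at hi
          obtain ⟨hi1, hi2⟩ := hi
          rw [mem_filter] at hi1
          rw [mem_coe, Finset.mem_product]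
          constructor
          · rw [mem_powersetCard]
            exact ⟨inter_subset_right, hi1.2⟩
          · rw [Fintype.mem_piFinset]
            intro r
            rw [mem_powersetCard]
            exact ⟨hVsub i r, congrFun hi2 r⟩)
        (by
          intro i hi i' hi' heq
          simp only [Prod.mk.injEq] at heq
          apply hSinj
          rw [← hrecover i, ← hrecover i', heq.1]
          congr 1
          apply biUnion_congr rfl
          intro r _
          exact congrFun heq.2 r)
      refine hle.trans (le_of_eq ?_)
      rw [Finset.card_product, Finset.card_powersetCard, Fintype.card_piFinset]
      congr 1
      exact Finset.prod_congr rfl fun r _ => Finset.card_powersetCard _ _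
    -- pass to reals
    have hchoose : ∀ (n k c : ℕ), n ≤ c → ((n.choose k : ℝ)) ≤ (c : ℝ) ^ k / k.factorial := by
      intro n k c hnc
      calc ((n.choose k : ℝ)) ≤ ((c.choose k : ℝ)) := by
            exact_mod_cast Nat.choose_le_choose k hnc
        _ ≤ (c : ℝ) ^ k / k.factorial := Nat.choose_le_pow_div k c
    rw [h1]
    push_cast
    rw [hB]
    apply Finset.sum_le_sum
    intro ω hω
    rw [h2 ω]
    push_cast
    rw [Finset.mul_sum]
    apply Finset.sum_le_sum
    intro nn hnn
    calc ((((Finset.univ.filter fun i : Fin q => m ≤ (S i ∩ T).card).filter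
              fun i => (S i ∩ T).card = ω).filter
              fun i => (fun r => (V i r).card) = nn).card : ℝ)
        ≤ ((T.card.choose ω * ∏ r, ((Ast r).card.choose (nn r)) : ℕ) : ℝ) := by
          exact_mod_cast h3 ω nn
      _ = ((T.card.choose ω : ℝ)) * ∏ r, (((Ast r).card.choose (nn r) : ℝ)) := by push_cast; ring
      _ ≤ ((p * w : ℝ) ^ ω / ω.factorial) *
            ∏ r, ((Ast r).card : ℝ) ^ nn r / (nn r).factorial := by
          apply mul_le_mul
          · have := hchoose T.card ω (p * w) hT
            calc ((T.card.choose ω : ℝ)) ≤ ((p * w : ℕ) : ℝ) ^ ω / ω.factorial := this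
              _ = (p * w : ℝ) ^ ω / ω.factorial := by push_cast; ring
          · apply Finset.prod_le_prod
            · intro r _; positivity
            · intro r _
              exact hchoose _ _ _ le_rfl
          · apply Finset.prod_nonneg; intro r _; positivity
          · positivity
  -- positivity of B
  have hmp : m ≤ p := Nat.ceil_le.mpr (by nlinarith [Nat.cast_nonneg (α := ℝ) p])
  have hBpos : 0 < B := by
    rw [hB]
    have hterm : ∀ ω ∈ Finset.Icc m p, (0:ℝ) ≤
        ((p * w : ℝ) ^ ω / ω.factorial) *
            ∑ nn ∈ (Fintype.piFinset fun i => Finset.range (l i + 1)).filter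
                (fun nn => ∑ i, nn i = p - ω),
              ∏ i, ((Ast i).card : ℝ) ^ nn i / (nn i).factorial := by
      intro ω _
      apply mul_nonneg
      · positivity
      · apply Finset.sum_nonneg
        intro nn _
        apply Finset.prod_nonneg
        intro r _
        positivity
    apply Finset.sum_pos' hterm
    refine ⟨p, by rw [mem_Icc]; exact ⟨hmp, le_rfl⟩, ?_⟩
    have hinner : (1:ℝ) ≤ ∑ nn ∈ (Fintype.piFinset fun i => Finset.range (l i + 1)).filter
                (fun nn => ∑ i, nn i = p - p),
              ∏ i, ((Ast i).card : ℝ) ^ nn i / (nn i).factorial := by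
      have hmem : (fun _ : Fin ρ => 0) ∈ (Fintype.piFinset fun i => Finset.range (l i + 1)).filter
                (fun nn => ∑ i, nn i = p - p) := by
        rw [mem_filter]
        constructor
        · rw [Fintype.mem_piFinset]; intro r; rw [mem_range]; omega
        · simp
      have := Finset.single_le_sum (f := fun nn : Fin ρ → ℕ =>
          ∏ i, ((Ast i).card : ℝ) ^ nn i / (nn i).factorial)
        (fun nn _ => Finset.prod_nonneg fun r _ => by positivity) hmem
      simpa using this
    have hpw : (0:ℝ) < (p * w : ℝ) ^ p / p.factorial := by
      have : (0:ℝ) < (p : ℝ) * w := by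
        have h1 : (0:ℝ) < (p:ℝ) := by exact_mod_cast Nat.lt_of_lt_of_le Nat.zero_lt_two hp
        have h2 : (0:ℝ) < (w:ℝ) := by exact_mod_cast hw
        positivity
      positivity
    nlinarith
  have hq0 : 0 < q := by
    have : (0:ℝ) < q := by linarith
    exact_mod_cast this
  -- greedy step
  have step : ∀ T : Finset γ, T.card ≤ p * w → ∃ i : Fin q, ((S i ∩ T).card : ℝ) < ζ * p := by
    intro T hT
    by_contra hcon
    push_neg at hcon
    have hall : (Finset.univ.filter fun i : Fin q => m ≤ (S i ∩ T).card) = Finset.univ := by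
      apply Finset.filter_true_of_mem
      intro i _
      exact Nat.ceil_le.mpr (hcon i)
    have := key T hT
    rw [hall, card_univ, Fintype.card_fin] at this
    linarith
  -- greedy induction
  have main : ∀ k, k ≤ w → ∃ ν : ℕ → Fin q, ∀ L, 1 ≤ L → L < k →
      ((((Finset.range L).biUnion fun n => S (ν n)) ∩ S (ν L)).card : ℝ) ≤ ζ * p := by
    intro k
    induction k with
    | zero => exact fun _ => ⟨fun _ => ⟨0, hq0⟩, fun L _ h0 => absurd h0 (by omega)⟩
    | succ k ih =>
      intro hk
      obtain ⟨ν, hν⟩ := ih (by omega)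
      set T := (Finset.range k).biUnion fun n => S (ν n) with hT
      have hTc : T.card ≤ p * w := by
        refine le_trans card_biUnion_le ?_
        calc ∑ n ∈ Finset.range k, (S (ν n)).card = ∑ n ∈ Finset.range k, p := by
              apply Finset.sum_congr rfl; intro n _; exact hScard (ν n)
          _ = k * p := by rw [Finset.sum_const, card_range, smul_eq_mul]
          _ ≤ p * w := by rw [mul_comm]; exact Nat.mul_le_mul_left p (by omega)
      obtain ⟨i, hi⟩ := step T hTc
      refine ⟨fun n => if n = k then i else ν n, ?_⟩
      intro L h1 hL
      rcases Nat.lt_or_ge L k with h | h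
      · have hb : ((Finset.range L).biUnion fun n => S (if n = k then i else ν n))
            = (Finset.range L).biUnion fun n => S (ν n) := by
          apply biUnion_congr rfl
          intro n hn
          rw [mem_range] at hn
          rw [if_neg (by omega)]
        have hv : (fun n => if n = k then i else ν n) L = ν L := if_neg (by omega)
        rw [hb, hv]
        exact hν L h1 h
      · have hLk : L = k := by omega
        subst hLk
        have hb : ((Finset.range L).biUnion fun n => S (if n = L then i else ν n)) = T := by
          apply biUnion_congr rfl
          intro n hn
          rw [mem_range] at hn
          rw [if_neg (by omega)]
        have hv : (fun n => if n = L then i else ν n) L = i := if_pos rfl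
        rw [hb, hv, Finset.inter_comm]
        exact le_of_lt hi
  obtain ⟨ν, hν⟩ := main w le_rfl
  refine ⟨fun j => ν j.val, ?_⟩
  intro L hL
  have he : ((Finset.univ.filter fun i : Fin w => i < L).biUnion fun i => S (ν i.val))
      = (Finset.range L.val).biUnion fun n => S (ν n) := by
    ext x
    simp only [mem_biUnion, mem_filter, mem_univ, true_and, mem_range]
    constructor
    · rintro ⟨i, hi, hx⟩
      exact ⟨i.val, hi, hx⟩
    · rintro ⟨n, hn, hx⟩
      exact ⟨⟨n, hn.trans L.isLt⟩, hn, hx⟩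
  rw [he]
  exact hν L.val hL L.isLt
end

section
/- Let G be a finite abelian group with |G| = N, let δ, α be real numbers with 0 < α ≤ δ, let A ⊆ G with |A| = δN, let k ≥ 2 be an integer, and let R_α = { r ∈ Ĝ : |Â(r)| ≥ αN } where Â(r) = Σ_{x∈A} e(−r·x) is the Fourier transform with respect to the characters of G. Then for any set B ⊆ R_α one has T_k(B) ≥ (δ α^{2k} / δ^{2k}) · |B|^{2k}. -/
open Finset

/-- The Fourier transform of (the indicator of) `A ⊆ G` at a character `ψ` of `G`:
`Â(ψ) = ∑_{x ∈ A} e(−ψ·x)`. -/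
noncomputable def fourierChar {G : Type*} [AddCommGroup G] [Fintype G]
    (A : Finset G) (ψ : AddChar G ℂ) : ℂ :=
  ∑ x ∈ A, ψ (-x)

/-- `T_k(B)` for a set `B` of characters: the number of `2k`-tuples
`(r_1,…,r_k,r'_1,…,r'_k) ∈ B^{2k}` with `r_1+⋯+r_k = r'_1+⋯+r'_k` in the dual group
(written multiplicatively on characters). -/
noncomputable def TkChar {G : Type*} [AddCommGroup G] [Fintype G]
    (k : ℕ) (B : Set (AddChar G ℂ)) : ℕ :=
  Set.ncard {v : (Fin k → AddChar G ℂ) × (Fin k → AddChar G ℂ) |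
    (∀ i, v.1 i ∈ B) ∧ (∀ i, v.2 i ∈ B) ∧ ∏ i, v.1 i = ∏ i, v.2 i}

theorem stmt18 {G : Type*} [AddCommGroup G] [Fintype G]
    (δ α : ℝ) (hα : 0 < α) (hαδ : α ≤ δ)
    (A : Finset G) (hA : (A.card : ℝ) = δ * Fintype.card G)
    (k : ℕ) (hk : 2 ≤ k)
    (B : Set (AddChar G ℂ))
    (hB : ∀ ψ ∈ B, α * Fintype.card G ≤ ‖fourierChar A ψ‖) :
    δ * α ^ (2 * k) / δ ^ (2 * k) * (B.ncard : ℝ) ^ (2 * k) ≤ (TkChar k B : ℝ) := by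
  classical
  set N : ℕ := Fintype.card G with hNdef
  have hN0 : (0:ℝ) < N := by exact_mod_cast Fintype.card_pos
  have hδ : 0 < δ := lt_of_lt_of_le hα hαδ
  have hBfin : B.Finite := B.toFinite
  set Bf : Finset (AddChar G ℂ) := hBfin.toFinset with hBfdef
  have hBcard : (B.ncard : ℝ) = Bf.card := by
    rw [Set.ncard_eq_toFinset_card B hBfin]
  have hmemBf : ∀ r : AddChar G ℂ, r ∈ Bf ↔ r ∈ B := fun r => hBfin.mem_toFinset
  -- T_k(B) as the cardinality of a finset
  set P : Finset (Fin k → AddChar G ℂ) := Fintype.piFinset fun _ => Bf with hPdef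
  set Sf : Finset ((Fin k → AddChar G ℂ) × (Fin k → AddChar G ℂ)) :=
    (P ×ˢ P).filter (fun v => ∏ i, v.1 i = ∏ i, v.2 i) with hSfdef
  have hT : TkChar k B = Sf.card := by
    rw [TkChar, ← Set.ncard_coe_finset]
    congr 1
    ext v
    simp only [Set.mem_setOf_eq, Finset.mem_coe, hSfdef, mem_filter, mem_product, hPdef,
      Fintype.mem_piFinset, hmemBf]
    tauto
  -- the unimodular coefficients
  set c : AddChar G ℂ → ℂ :=
    fun r => (starRingEnd ℂ) (fourierChar A r) / (‖fourierChar A r‖ : ℂ) with hcdef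
  have hFne : ∀ r ∈ Bf, fourierChar A r ≠ 0 := by
    intro r hr
    have := hB r ((hmemBf r).1 hr)
    intro h
    rw [h] at this
    simp at this
    nlinarith
  have habs : ∀ r ∈ Bf, ‖c r‖ = 1 := by
    intro r hr
    have h := hFne r hr
    have habs0 : ‖fourierChar A r‖ ≠ 0 := by
      simpa using h
    simp [hcdef, norm_div, Complex.norm_real, abs_of_nonneg (norm_nonneg _),
      div_self habs0]
  have hmul : ∀ r ∈ Bf, c r * fourierChar A r = (‖fourierChar A r‖ : ℂ) := by
    intro r hr
    have h := hFne r hr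
    have habs0 : (‖fourierChar A r‖ : ℂ) ≠ 0 := by
      simpa using h
    simp only [hcdef]
    rw [div_mul_eq_mul_div, div_eq_iff habs0, mul_comm ((starRingEnd ℂ) _), Complex.mul_conj']
    push_cast
    ring
  set F : G → ℂ := fun x => ∑ r ∈ Bf, c r * r x with hFdef
  -- Step 1 : lower bound on the L¹ sum
  have h1 : ∑ x ∈ A, F (-x) = ((∑ r ∈ Bf, ‖fourierChar A r‖ : ℝ) : ℂ) := by
    push_cast
    rw [Finset.sum_comm]
    refine Finset.sum_congr rfl fun r hr => ?_
    rw [← Finset.mul_sum]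
    exact hmul r hr
  have h2 : α * N * Bf.card ≤ ∑ x ∈ A, ‖F (-x)‖ := by
    calc α * N * Bf.card = ∑ _r ∈ Bf, α * N := by rw [Finset.sum_const]; ring
    _ ≤ ∑ r ∈ Bf, ‖fourierChar A r‖ :=
        Finset.sum_le_sum fun r hr => hB r ((hmemBf r).1 hr)
    _ = ‖∑ x ∈ A, F (-x)‖ := by
        rw [h1, Complex.norm_real, Real.norm_eq_abs, abs_of_nonneg]
        positivity
    _ ≤ ∑ x ∈ A, ‖F (-x)‖ := by
        simpa using norm_sum_le A fun x => F (-x)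
  -- Step 2 : Hölder
  have hAcard : (0:ℝ) < A.card := by rw [hA]; positivity
  have h3 : (∑ x ∈ A, ‖F (-x)‖) ^ (2*k) ≤
      (A.card : ℝ) ^ (2*k-1) * ∑ x ∈ A, ‖F (-x)‖ ^ (2*k) := by
    have h := pow_sum_div_card_le_sum_pow (s := A)
      (f := fun x => ‖F (-x)‖) (fun i _ => norm_nonneg _) (2*k-1)
    rw [Nat.sub_add_cancel (by omega)] at h
    rw [div_le_iff₀ (by positivity)] at h
    linarith [h]
  -- Step 3 : extend the sum to all of G
  have h4 : ∑ x ∈ A, ‖F (-x)‖ ^ (2*k) ≤ ∑ x : G, ‖F x‖ ^ (2*k) := by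
    calc ∑ x ∈ A, ‖F (-x)‖ ^ (2*k)
        ≤ ∑ x : G, ‖F (-x)‖ ^ (2*k) :=
          Finset.sum_le_sum_of_subset_of_nonneg (Finset.subset_univ A)
            (fun _ _ _ => by positivity)
    _ = ∑ x : G, ‖F x‖ ^ (2*k) :=
        Fintype.sum_equiv (Equiv.neg G) _ _ (fun x => by simp)
  -- Step 4 : the L^{2k} norm counts solutions
  have h5 : ∑ x : G, ‖F x‖ ^ (2*k) ≤ (N : ℝ) * Sf.card := by
    have hexp : ((∑ x : G, ‖F x‖ ^ (2*k) : ℝ) : ℂ) =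
        ∑ x : G, (F x) ^ k * (starRingEnd ℂ) ((F x) ^ k) := by
      push_cast
      refine Finset.sum_congr rfl fun x _ => ?_
      rw [Complex.mul_conj', norm_pow]
      push_cast
      rw [← pow_mul, mul_comm k 2]
    have hpow : ∀ x : G, (F x) ^ k = ∑ p ∈ P, ∏ i, (c (p i) * p i x) := by
      intro x
      rw [hFdef]
      simp only
      rw [← Fin.prod_const k (∑ r ∈ Bf, c r * r x), Finset.prod_univ_sum]
    have hconj : ∀ x : G, (starRingEnd ℂ) ((F x) ^ k) =
        ∑ q ∈ P, ∏ i, ((starRingEnd ℂ) (c (q i)) * (q i)⁻¹ x) := by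
      intro x
      rw [hpow x, map_sum]
      refine Finset.sum_congr rfl fun q _ => ?_
      rw [map_prod]
      refine Finset.prod_congr rfl fun i _ => ?_
      rw [map_mul, AddChar.inv_apply, AddChar.map_neg_eq_conj]
    have horth : ∀ p q : Fin k → AddChar G ℂ,
        ∑ x : G, ((∏ i, p i) x * (∏ i, q i)⁻¹ x) =
          (if (∏ i, p i) = (∏ i, q i) then (N:ℂ) else 0) := by
      intro p q
      have h0 : ((∏ i, p i) * (∏ i, q i)⁻¹ = 0) ↔ (∏ i, p i) = (∏ i, q i) := by
        rw [show (0 : AddChar G ℂ) = 1 from rfl, mul_inv_eq_one]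
      calc ∑ x : G, ((∏ i, p i) x * (∏ i, q i)⁻¹ x)
          = ∑ x : G, ((∏ i, p i) * (∏ i, q i)⁻¹) x := by
            refine Finset.sum_congr rfl fun x _ => ?_
            rw [AddChar.mul_apply]
      _ = if (∏ i, p i) * (∏ i, q i)⁻¹ = 0 then (N:ℂ) else 0 := by
            rw [AddChar.sum_eq_ite]
      _ = if (∏ i, p i) = (∏ i, q i) then (N:ℂ) else 0 := by simp_rw [h0]
    have hZ : ((∑ x : G, ‖F x‖ ^ (2*k) : ℝ) : ℂ) =
        ∑ p ∈ P, ∑ q ∈ P,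
          ((∏ i, c (p i)) * (∏ i, (starRingEnd ℂ) (c (q i)))) *
            (if (∏ i, p i) = (∏ i, q i) then (N:ℂ) else 0) := by
      rw [hexp]
      have : ∀ x : G, (F x) ^ k * (starRingEnd ℂ) ((F x) ^ k) =
          ∑ p ∈ P, ∑ q ∈ P,
            ((∏ i, c (p i)) * (∏ i, (starRingEnd ℂ) (c (q i)))) *
              ((∏ i, p i) x * (∏ i, q i)⁻¹ x) := by
        intro x
        rw [hconj x, hpow x, Finset.sum_mul_sum]
        refine Finset.sum_congr rfl fun p _ => Finset.sum_congr rfl fun q _ => ?_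
        rw [Finset.prod_mul_distrib, Finset.prod_mul_distrib]
        rw [← AddChar.prod_apply, ← AddChar.prod_apply]
        have : ∏ i, ((q i)⁻¹ : AddChar G ℂ) = (∏ i, q i)⁻¹ := by
          rw [← Finset.prod_inv_distrib]
        rw [this]
        ring
      simp_rw [this]
      rw [Finset.sum_comm]
      refine Finset.sum_congr rfl fun p _ => ?_
      rw [Finset.sum_comm]
      refine Finset.sum_congr rfl fun q _ => ?_
      rw [← Finset.mul_sum, horth p q]
    -- take absolute values
    have habsP : ∀ p ∈ P, ‖∏ i, c (p i)‖ = 1 := by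
      intro p hp
      rw [norm_prod]
      refine Finset.prod_eq_one fun i _ => habs _ ?_
      exact (Fintype.mem_piFinset.1 hp) i
    have hbound : ∑ x : G, ‖F x‖ ^ (2*k) ≤
        ∑ p ∈ P, ∑ q ∈ P, (if (∏ i, p i) = (∏ i, q i) then (N:ℝ) else 0) := by
      have hnn : (0:ℝ) ≤ ∑ x : G, ‖F x‖ ^ (2*k) := by positivity
      calc ∑ x : G, ‖F x‖ ^ (2*k)
          = ‖((∑ x : G, ‖F x‖ ^ (2*k) : ℝ) : ℂ)‖ := by
            rw [Complex.norm_real, Real.norm_eq_abs, abs_of_nonneg hnn]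
      _ = ‖∑ p ∈ P, ∑ q ∈ P,
            ((∏ i, c (p i)) * (∏ i, (starRingEnd ℂ) (c (q i)))) *
              (if (∏ i, p i) = (∏ i, q i) then (N:ℂ) else 0)‖ := by rw [hZ]
      _ ≤ ∑ p ∈ P, ∑ q ∈ P, ‖
            ((∏ i, c (p i)) * (∏ i, (starRingEnd ℂ) (c (q i)))) *
              (if (∏ i, p i) = (∏ i, q i) then (N:ℂ) else 0)‖ := by
            refine (norm_sum_le _ _).trans ?_
            exact Finset.sum_le_sum fun p _ => norm_sum_le _ _
      _ = ∑ p ∈ P, ∑ q ∈ P, (if (∏ i, p i) = (∏ i, q i) then (N:ℝ) else 0) := by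
            refine Finset.sum_congr rfl fun p hp => Finset.sum_congr rfl fun q hq => ?_
            rw [norm_mul, norm_mul, habsP p hp]
            have : ‖∏ i, (starRingEnd ℂ) (c (q i))‖ = 1 := by
              rw [norm_prod]
              refine Finset.prod_eq_one fun i _ => ?_
              rw [Complex.norm_conj]
              exact habs _ ((Fintype.mem_piFinset.1 hq) i)
            rw [this, apply_ite (fun z : ℂ => ‖z‖)]
            simp
    refine hbound.trans_eq ?_
    rw [← Finset.sum_product']
    rw [← Finset.sum_filter]
    rw [Finset.sum_const, ← hSfdef, nsmul_eq_mul]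
    ring
  -- Assemble everything
  have main : (α * N * Bf.card) ^ (2*k) ≤ ((δ * N)) ^ (2*k-1) * ((N:ℝ) * Sf.card) := by
    calc (α * N * Bf.card) ^ (2*k)
        ≤ (∑ x ∈ A, ‖F (-x)‖) ^ (2*k) := by
          apply pow_le_pow_left₀ (by positivity) h2
    _ ≤ (A.card : ℝ) ^ (2*k-1) * ∑ x ∈ A, ‖F (-x)‖ ^ (2*k) := h3
    _ ≤ (A.card : ℝ) ^ (2*k-1) * ((N:ℝ) * Sf.card) := by
          refine mul_le_mul_of_nonneg_left (h4.trans h5) (by positivity)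
    _ = ((δ * N)) ^ (2*k-1) * ((N:ℝ) * Sf.card) := by rw [hA]
  have hNpow : ((N:ℝ)) ^ (2*k-1) * N = (N:ℝ) ^ (2*k) := by
    rw [← pow_succ, Nat.sub_add_cancel (by omega)]
  have key2 : α ^ (2*k) * (Bf.card:ℝ) ^ (2*k) ≤ δ ^ (2*k-1) * Sf.card := by
    have hL : (α * N * Bf.card) ^ (2*k) = α ^ (2*k) * (Bf.card:ℝ) ^ (2*k) * (N:ℝ) ^ (2*k) := by
      rw [mul_pow, mul_pow]; ring
    have hR : ((δ * N)) ^ (2*k-1) * ((N:ℝ) * Sf.card) =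
        δ ^ (2*k-1) * Sf.card * (N:ℝ) ^ (2*k) := by
      rw [mul_pow, ← hNpow]; ring
    rw [hL, hR] at main
    exact le_of_mul_le_mul_right main (by positivity)
  rw [hT, hBcard]
  have hcoef : δ * α ^ (2*k) / δ ^ (2*k) = α ^ (2*k) / δ ^ (2*k-1) := by
    rw [show 2*k = (2*k-1)+1 by omega, pow_succ δ]
    field_simp
    ring_nf
    congr 1
    omega
  rw [hcoef, div_mul_eq_mul_div, div_le_iff₀ (by positivity)]
  linarith [key2]
end
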